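/- Define, for t > 0, f(t) = (π coth(π/(2t)) − 2t) / (32π t⁴ (cosh(π/t) − 1)). Then lim_{t→0⁺} t⁴ · e^{π/t} · f(t) = 1/16. Equivalently, the heat kernel of the isotropic bi-Heisenberg group (α₁ = α₂ = 1) at the cut point ζ = (0,0,0,0,1), where d(0,ζ)² = 4π, satisfies f(t) = t^{−4} e^{−d²(0,ζ)/(4t)} φ(t) with φ(t) → 1/16 as t → 0⁺. -/

import Mathlib

open Real Filter

/-- The bi-Heisenberg heat kernel (isotropic case `α₁ = α₂ = 1`) at the cut point
`ζ = (0,0,0,0,1)` on the vertical axis, as a function of time `t > 0`. -/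
noncomputable def f (t : ℝ) : ℝ :=
  (Real.pi * (Real.cosh (Real.pi / (2 * t)) / Real.sinh (Real.pi / (2 * t))) - 2 * t) /
    (32 * Real.pi * t ^ 4 * (Real.cosh (Real.pi / t) - 1))

noncomputable def g (t : ℝ) : ℝ :=
  (Real.pi * (1 + Real.exp (-(Real.pi / t))) / (1 - Real.exp (-(Real.pi / t))) - 2 * t) *
    (2 / ((1 - Real.exp (-(Real.pi / t))) ^ 2 * (32 * Real.pi)))

lemma hu : Tendsto (fun t : ℝ => Real.exp (-(Real.pi / t))) (nhdsWithin 0 (Set.Ioi 0)) (nhds 0) := by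
  apply Real.tendsto_exp_atBot.comp
  apply tendsto_neg_atTop_atBot.comp
  have h1 : Tendsto (fun t : ℝ => t⁻¹) (nhdsWithin 0 (Set.Ioi 0)) atTop := tendsto_inv_nhdsGT_zero
  have := h1.const_mul_atTop Real.pi_pos
  exact this.congr (fun x => (div_eq_mul_inv _ _).symm)

lemma g_lim : Tendsto g (nhdsWithin 0 (Set.Ioi 0)) (nhds (1 / 16)) := by
  have ht : Tendsto (fun t : ℝ => t) (nhdsWithin 0 (Set.Ioi 0)) (nhds 0) :=
    Filter.tendsto_id.mono_left nhdsWithin_le_nhds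
  have h1 : Tendsto (fun t : ℝ => Real.pi * (1 + Real.exp (-(Real.pi / t))) /
      (1 - Real.exp (-(Real.pi / t))) - 2 * t) (nhdsWithin 0 (Set.Ioi 0))
      (nhds (Real.pi * (1 + 0) / (1 - 0) - 2 * 0)) :=
    ((tendsto_const_nhds.mul (tendsto_const_nhds.add hu)).div
      (tendsto_const_nhds.sub hu) (by norm_num)).sub (tendsto_const_nhds.mul ht)
  have h2 : Tendsto (fun t : ℝ => 2 / ((1 - Real.exp (-(Real.pi / t))) ^ 2 * (32 * Real.pi)))
      (nhdsWithin 0 (Set.Ioi 0)) (nhds (2 / ((1 - 0) ^ 2 * (32 * Real.pi)))) := by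
    apply tendsto_const_nhds.div (((tendsto_const_nhds.sub hu).pow 2).mul tendsto_const_nhds)
    simp [Real.pi_ne_zero]
  have h := h1.mul h2
  convert h using 2
  · rfl
  · field_simp
    ring

lemma eq_on {t : ℝ} (ht : 0 < t) : t ^ 4 * Real.exp (Real.pi / t) * f t = g t := by
  have hπ := Real.pi_pos
  set E := Real.exp (Real.pi / (2 * t)) with hE
  have hE1 : 1 < E := by
    rw [hE]
    exact Real.one_lt_exp_iff.mpr (by positivity)
  have hE0 : 0 < E := lt_trans one_pos hE1
  have hexp : Real.exp (Real.pi / t) = E ^ 2 := by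
    rw [hE, ← Real.exp_nat_mul]
    congr 1
    field_simp
    ring
  have hexpneg : Real.exp (-(Real.pi / t)) = (E ^ 2)⁻¹ := by
    rw [Real.exp_neg, hexp]
  have hcosh2 : Real.cosh (Real.pi / t) = (E ^ 2 + (E ^ 2)⁻¹) / 2 := by
    rw [Real.cosh_eq, hexp, ← hexpneg, Real.exp_neg, hexp]
  have hcosh : Real.cosh (Real.pi / (2 * t)) = (E + E⁻¹) / 2 := by
    rw [Real.cosh_eq, ← hE, Real.exp_neg, ← hE]
  have hsinh : Real.sinh (Real.pi / (2 * t)) = (E - E⁻¹) / 2 := by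
    rw [Real.sinh_eq, ← hE, Real.exp_neg, ← hE]
  have hne1 : E - E⁻¹ ≠ 0 := by
    have : E⁻¹ < 1 := inv_lt_one_of_one_lt₀ hE1
    nlinarith
  have hne2 : E ^ 2 + (E ^ 2)⁻¹ - 2 ≠ 0 := by
    have h : (E - E⁻¹) ^ 2 > 0 := by positivity
    have : E ^ 2 + (E ^ 2)⁻¹ - 2 = (E - E⁻¹) ^ 2 := by field_simp; ring
    rw [this]; exact ne_of_gt h
  have hne3 : 1 - (E ^ 2)⁻¹ ≠ 0 := by
    have : (E ^ 2)⁻¹ < 1 := by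
      rw [inv_lt_one_iff₀]; right; nlinarith
    nlinarith
  rw [f, g, hexp, hexpneg, hcosh2, hcosh, hsinh]
  have ht' : t ≠ 0 := ne_of_gt ht
  have hA : (-1:ℝ) + E ^ 2 ≠ 0 := by nlinarith
  have hB : -(E ^ 2 * Real.pi * 64) + E ^ 4 * Real.pi * 32 + Real.pi * 32 ≠ 0 := by
    have : -(E ^ 2 * Real.pi * 64) + E ^ 4 * Real.pi * 32 + Real.pi * 32
        = 32 * Real.pi * (E ^ 2 - 1) ^ 2 := by ring
    rw [this]
    have h2 : (0:ℝ) < E ^ 2 - 1 := by nlinarith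
    exact ne_of_gt (by nlinarith [mul_pos hπ (mul_pos h2 h2)])
  have hC : -(t ^ 4 * E ^ 2 * Real.pi * 64) + t ^ 4 * E ^ 4 * Real.pi * 32 + t ^ 4 * Real.pi * 32 ≠ 0 := by
    have : -(t ^ 4 * E ^ 2 * Real.pi * 64) + t ^ 4 * E ^ 4 * Real.pi * 32 + t ^ 4 * Real.pi * 32
        = 32 * Real.pi * t ^ 4 * (E ^ 2 - 1) ^ 2 := by ring
    rw [this]
    have h2 : (0:ℝ) < E ^ 2 - 1 := by nlinarith
    have h4 : (0:ℝ) < t ^ 4 := by positivity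
    exact ne_of_gt (by nlinarith [mul_pos (mul_pos hπ h4) (mul_pos h2 h2)])
  field_simp [hA, hB, hC]
  have h2 : (0:ℝ) < E ^ 2 - 1 := by nlinarith
  have h4 : (0:ℝ) < t ^ 4 := by positivity
  have hD1 : 32 * Real.pi * t ^ 4 * (E ^ 2 * E ^ 2 + 1 - E ^ 2 * 2) ≠ 0 := by
    have : 32 * Real.pi * t ^ 4 * (E ^ 2 * E ^ 2 + 1 - E ^ 2 * 2)
        = 32 * Real.pi * t ^ 4 * (E ^ 2 - 1) ^ 2 := by ring
    rw [this]
    exact ne_of_gt (mul_pos (mul_pos (mul_pos (by norm_num : (0:ℝ) < 32) hπ) h4) (pow_pos h2 2))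
  have hD2 : (E ^ 2 - 1) ^ 2 * (32 * Real.pi) ≠ 0 :=
    ne_of_gt (mul_pos (pow_pos h2 2) (by positivity))
  rw [div_eq_div_iff (by rw [show E ^ 4 + 1 - E ^ 2 * 2 = (E ^ 2 - 1) ^ 2 by ring]; exact pow_ne_zero 2 (ne_of_gt h2)) (pow_ne_zero 2 (ne_of_gt h2))]
  have hA1 : E * E - 1 ≠ 0 := by nlinarith
  have hA2 : E ^ 2 - 1 ≠ 0 := ne_of_gt h2
  field_simp [hA1, hA2]
  ring


/-- Small-time asymptotics at the cut point in the isotropic case: since `d(0,ζ)² = 4π`,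
one has `f(t) = t⁻⁴ e^{−d²(0,ζ)/(4t)} φ(t)` with `φ(t) = t⁴ e^{π/t} f(t) → 1/16`
as `t → 0⁺`. -/
theorem heat_kernel_asymptotics_isotropic :
    Tendsto (fun t : ℝ => t ^ 4 * Real.exp (Real.pi / t) * f t)
      (nhdsWithin 0 (Set.Ioi 0)) (nhds (1 / 16)) := by
  refine g_lim.congr' ?_
  filter_upwards [self_mem_nhdsWithin] with t ht
  exact (eq_on ht).symm
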